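/- Let M be a minion on (A, B) containing no constant function, in which every member depends on at most d coordinates, and let T be the minion of all dictators on a set C with |C| ≥ 2. Then the map sending each t ∈ M to the set of dictators (coordinate projections) corresponding to the coordinates t depends on is a minion (d,1)-homomorphism from M to T. -/

import Mathlib

/-- `s` is the `π`-minor of `t`. -/
def MinorOf {A B X Y : Type*} (t : (X → A) → B) (π : X → Y) (s : (Y → A) → B) : Prop :=
  ∀ f : Y → A, s f = t (f ∘ π)

/-- `t` depends on coordinate `i`. -/
def DependsOnCoord {A B : Type*} {n : ℕ} (t : (Fin n → A) → B) (i : Fin n) : Prop :=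
  ∃ a b : Fin n → A, (∀ j, j ≠ i → a j = b j) ∧ t a ≠ t b

/-- The set of dictators on `t`'s dependency coordinates. -/
def DepDictators {A B C : Type*} {n : ℕ} (t : (Fin n → A) → B) :
    Set ((Fin n → C) → C) :=
  {g | ∃ i : Fin n, DependsOnCoord t i ∧ g = fun c => c i}

lemma eq_of_agree {A B : Type*} {n : ℕ} [DecidableEq A] (t : (Fin n → A) → B) :
    ∀ (k : ℕ) (a b : Fin n → A),
      (Finset.univ.filter fun j => a j ≠ b j).card ≤ k →
      (∀ j, a j ≠ b j → ¬ DependsOnCoord t j) → t a = t b := by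
  intro k
  induction k with
  | zero =>
    intro a b hc _
    have : ∀ j, a j = b j := by
      intro j
      by_contra hj
      have hpos : 0 < (Finset.univ.filter fun j => a j ≠ b j).card :=
        Finset.card_pos.mpr ⟨j, by simp [hj]⟩
      omega
    exact congrArg t (funext this)
  | succ k ih =>
    intro a b hc hdep
    by_cases hab : ∀ j, a j = b j
    · exact congrArg t (funext hab)
    · push_neg at hab
      obtain ⟨i, hi⟩ := hab
      set a' := Function.update a i (b i) with ha'
      have hnd := hdep i hi
      have h1 : t a = t a' := by
        by_contra hne
        exact hnd ⟨a, a', fun j hj => (Function.update_of_ne hj _ _).symm, hne⟩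
      have hsub : (Finset.univ.filter fun j => a' j ≠ b j) ⊆
          (Finset.univ.filter fun j => a j ≠ b j).erase i := by
        intro j hj
        simp only [Finset.mem_filter, Finset.mem_univ, true_and] at hj
        have hji : j ≠ i := by
          intro h; subst h; exact hj (Function.update_self _ _ _)
        rw [ha', Function.update_of_ne hji] at hj
        simp [hji, hj]
      have hcard : (Finset.univ.filter fun j => a' j ≠ b j).card ≤ k := by
        have h2 := Finset.card_le_card hsub
        have h3 : i ∈ (Finset.univ.filter fun j => a j ≠ b j) := by simp [hi]
        have := Finset.card_erase_of_mem h3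
        omega
      have h4 : t a' = t b := by
        apply ih a' b hcard
        intro j hj
        have hji : j ≠ i := by
          intro h; subst h; exact hj (Function.update_self _ _ _)
        rw [ha', Function.update_of_ne hji] at hj
        exact hdep j hj
      exact h1.trans h4

theorem stmt10 {A B C : Type*} [Fintype A] [Nonempty A] [Fintype C]
    (hC : 2 ≤ Fintype.card C) (d : ℕ)
    (M : ∀ n : ℕ, Set ((Fin n → A) → B))
    (hne : ∃ n t, t ∈ M n)
    (hclosed : ∀ (n m : ℕ) (π : Fin n → Fin m) (t : (Fin n → A) → B),
      t ∈ M n → (fun a => t (a ∘ π)) ∈ M m)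
    (hnoconst : ∀ n, ∀ t ∈ M n, ¬ ∃ b : B, ∀ a, t a = b)
    (hdep : ∀ n, ∀ t ∈ M n, {i | DependsOnCoord t i}.ncard ≤ d) :
    (∀ n, ∀ t ∈ M n,
      (DepDictators (C := C) t).Nonempty ∧
      (DepDictators (C := C) t).ncard ≤ d ∧
      DepDictators (C := C) t ⊆ {g : (Fin n → C) → C | ∃ i, g = fun c => c i}) ∧
    (∀ (n m : ℕ) (π : Fin n → Fin m) (t : (Fin n → A) → B) (s : (Fin m → A) → B),
      t ∈ M n → s ∈ M m → MinorOf t π s →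
      ∃ g ∈ DepDictators (C := C) t, ∃ h ∈ DepDictators (C := C) s,
        MinorOf g π h) := by
  classical
  -- every member depends on some coordinate
  have hexists : ∀ (n : ℕ) (t : (Fin n → A) → B), t ∈ M n → ∃ i, DependsOnCoord t i := by
    intro n t ht
    by_contra h
    push_neg at h
    apply hnoconst n t ht
    obtain ⟨a0⟩ : Nonempty (Fin n → A) := ⟨fun _ => Classical.arbitrary A⟩
    exact ⟨t a0, fun a => eq_of_agree t n a a0 (by
      exact le_trans (Finset.card_le_card (Finset.filter_subset _ _)) (by simp))
      (fun j _ => h j)⟩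
  constructor
  · intro n t ht
    refine ⟨?_, ?_, ?_⟩
    · obtain ⟨i, hi⟩ := hexists n t ht
      exact ⟨fun c => c i, i, hi, rfl⟩
    · have himg : DepDictators (C := C) t =
          (fun i : Fin n => fun c : Fin n → C => c i) '' {i | DependsOnCoord t i} := by
        ext g
        constructor
        · rintro ⟨i, hi, rfl⟩; exact ⟨i, hi, rfl⟩
        · rintro ⟨i, hi, rfl⟩; exact ⟨i, hi, rfl⟩
      rw [himg]
      exact le_trans (Set.ncard_image_le (Set.toFinite _)) (hdep n t ht)
    · rintro g ⟨i, _, rfl⟩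
      exact ⟨i, rfl⟩
  · intro n m π t s ht hs hmin
    obtain ⟨j, a, b, hab, hne'⟩ := hexists m s hs
    -- t (a ∘ π) ≠ t (b ∘ π)
    have htne : t (a ∘ π) ≠ t (b ∘ π) := by
      rw [← hmin a, ← hmin b]; exact hne'
    -- there is i with π i = j on which t depends
    have : ∃ i, π i = j ∧ DependsOnCoord t i := by
      by_contra h
      push_neg at h
      apply htne
      apply eq_of_agree t n _ _ (le_trans (Finset.card_le_card (Finset.filter_subset _ _)) (by simp))
      intro i hi
      have hpij : π i = j := by
        by_contra hpij
        exact hi (hab (π i) hpij)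
      intro hd
      exact (h i hpij) hd
    obtain ⟨i, hpij, hdi⟩ := this
    refine ⟨fun c => c i, ⟨i, hdi, rfl⟩, fun c => c j, ⟨j, ⟨a, b, hab, hne'⟩, rfl⟩, ?_⟩
    intro f
    simp [Function.comp, hpij]
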